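/- arXiv:2008.12297 — 5 statements merged into one kernel-verified Lean document; each statement's English description precedes it below -/
import Mathlib

section
/- For any permutation pattern σ of length k ≥ 2, the consecutive-σ-avoiding stack-sorting map satisfies SC_{comp(σ)} = comp ∘ SC_σ ∘ comp, where comp is the complementation map on permutations. -/
open List Finset

attribute [local instance] Classical.propDecidable

/-- Two lists (with distinct entries) have the same relative order. -/
def SameRel (u v : List ℕ) : Prop :=
  u.length = v.length ∧ ∀ i j, i < j → j < u.length →
    (u.getD i 0 < u.getD j 0 ↔ v.getD i 0 < v.getD j 0)

/-- `l` contains `σ` as a classical pattern. -/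
def ContainsPat (l σ : List ℕ) : Prop := ∃ u, u.Sublist l ∧ SameRel u σ

/-- `l` contains `σ` as a consecutive pattern. -/
def ContainsC (l σ : List ℕ) : Prop := ∃ u, u.IsInfix l ∧ SameRel u σ

/-- `l` avoids `σ` as a classical pattern. -/
def AvoidsPat (l σ : List ℕ) : Prop := ¬ ContainsPat l σ

/-- `l` avoids `σ` as a consecutive pattern. -/
def AvoidsC (l σ : List ℕ) : Prop := ¬ ContainsC l σ

/-- Generic right-greedy stack-sorting: push the next entry unless doing so creates a
`bad` stack (read top to bottom); otherwise pop the top of the stack to the output. -/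
noncomputable def stackAux (bad : List ℕ → Prop) : List ℕ → List ℕ → List ℕ → List ℕ
  | [], stack, out => out ++ stack
  | a :: rest, stack, out =>
    if bad (a :: stack) then
      match stack with
      | [] => stackAux bad rest [a] out
      | b :: s => stackAux bad (a :: rest) s (out ++ [b])
    else stackAux bad rest (a :: stack) out
  termination_by i s _ => 2 * i.length + s.length
  decreasing_by all_goals (first | omega | (simp [List.length_cons]; try omega))

noncomputable def SCgen (bad : List ℕ → Prop) (π : List ℕ) : List ℕ := stackAux bad π [] []

/-- The consecutive-`σ`-avoiding stack-sorting map. -/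
noncomputable def SCc (σ : List ℕ) : List ℕ → List ℕ := SCgen (fun l => ContainsC l σ)

/-- The classical-`σ`-avoiding stack-sorting map. -/
noncomputable def sCl (σ : List ℕ) : List ℕ → List ℕ := SCgen (fun l => ContainsPat l σ)

/-- `π` is (the one-line notation of) a permutation of `{1, …, n}`. -/
def IsPermList (n : ℕ) (π : List ℕ) : Prop := π.Perm ((List.range n).map (· + 1))

/-- Complementation on permutations of `{1, …, n}`. -/
def compl (n : ℕ) (π : List ℕ) : List ℕ := π.map (fun x => n + 1 - x)

/-- The finset of permutations of `{1, …, n}` in one-line notation. -/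
def permsFinset (n : ℕ) : Finset (List ℕ) := ((List.range n).map (· + 1)).permutations.toFinset

/-- The number of preimages of `π` in `S_n` under `f`. -/
noncomputable def preCount (f : List ℕ → List ℕ) (n : ℕ) (π : List ℕ) : ℕ :=
  ((permsFinset n).filter (fun τ => f τ = π)).card


/-! ### Auxiliary lemmas -/

private lemma getD_map_eq (f : ℕ → ℕ) (l : List ℕ) (i : ℕ) (h : i < l.length) :
    (l.map f).getD i 0 = f (l[i]) := by
  rw [List.getD_eq_getElem _ 0 (by simpa using h), List.getElem_map]

/-- The output of `stackAux` is a permutation of `out ++ stack ++ inp`. -/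
private lemma stackAux_perm (bad : List ℕ → Prop) :
    ∀ N inp stack out, 2 * inp.length + stack.length ≤ N →
      (stackAux bad inp stack out).Perm (out ++ stack ++ inp) := by
  intro N
  induction N with
  | zero =>
    intro inp stack out h
    cases inp with
    | nil => rw [stackAux.eq_def]; simp
    | cons a rest => simp only [List.length_cons] at h; omega
  | succ N ih =>
    intro inp stack out h
    cases inp with
    | nil => rw [stackAux.eq_def]; simp
    | cons a rest =>
      by_cases hb : bad (a :: stack)
      · cases stack with
        | nil =>
          rw [show stackAux bad (a :: rest) [] out = stackAux bad rest [a] out by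
            rw [stackAux.eq_def]; simp only [if_pos hb]]
          have := ih rest [a] out (by simp only [List.length_cons] at h ⊢; omega)
          refine this.trans ?_
          simp
        | cons b s =>
          rw [show stackAux bad (a :: rest) (b :: s) out
              = stackAux bad (a :: rest) s (out ++ [b]) by
            rw [stackAux.eq_def]; simp only [if_pos hb]]
          have := ih (a :: rest) s (out ++ [b])
            (by simp only [List.length_cons] at h ⊢; omega)
          refine this.trans ?_
          simp [List.append_assoc]
      · rw [show stackAux bad (a :: rest) stack out = stackAux bad rest (a :: stack) out by
          rw [stackAux.eq_def]; simp only [if_neg hb]]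
        have := ih rest (a :: stack) out (by simp only [List.length_cons] at h ⊢; omega)
        refine this.trans ?_
        simp only [List.append_assoc, List.cons_append]
        refine List.Perm.append_left out ?_
        exact List.perm_middle.symm

/-- Conjugation lemma for `stackAux` under an entrywise map `f` exchanging two
`bad` predicates. -/
private lemma stack_conj (bad1 bad2 : List ℕ → Prop) (f : ℕ → ℕ) (L : List ℕ)
    (hbad : ∀ l : List ℕ, l.reverse.Sublist L → (bad1 l ↔ bad2 (l.map f))) :
    ∀ N inp stack out, 2 * inp.length + stack.length ≤ N →
      (stack.reverse ++ inp).Sublist L →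
      stackAux bad2 (inp.map f) (stack.map f) (out.map f)
        = (stackAux bad1 inp stack out).map f := by
  intro N
  induction N with
  | zero =>
    intro inp stack out h _
    cases inp with
    | nil => rw [stackAux.eq_def, stackAux.eq_def]; simp
    | cons a rest => simp only [List.length_cons] at h; omega
  | succ N ih =>
    intro inp stack out h hsub
    cases inp with
    | nil => rw [stackAux.eq_def, stackAux.eq_def]; simp
    | cons a rest =>
      have hrev : (a :: stack).reverse.Sublist L := by
        simp only [List.reverse_cons]
        refine List.Sublist.trans ?_ hsub
        exact List.Sublist.append_left (List.Sublist.cons₂ a (List.nil_sublist rest)) _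
      by_cases hb : bad1 (a :: stack)
      · have hb2 : bad2 ((a :: stack).map f) := (hbad _ hrev).mp hb
        cases stack with
        | nil =>
          rw [show stackAux bad1 (a :: rest) [] out = stackAux bad1 rest [a] out by
            rw [stackAux.eq_def]; simp only [if_pos hb]]
          simp only [List.map_cons, List.map_nil]
          rw [show stackAux bad2 (f a :: rest.map f) [] (out.map f)
              = stackAux bad2 (rest.map f) [f a] (out.map f) by
            rw [stackAux.eq_def]; simp only [if_pos (show bad2 [f a] by simpa using hb2)]]
          have := ih rest [a] out (by simp only [List.length_cons] at h ⊢; omega)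
            (by simpa using hsub)
          simpa using this
        | cons b s =>
          rw [show stackAux bad1 (a :: rest) (b :: s) out
              = stackAux bad1 (a :: rest) s (out ++ [b]) by
            rw [stackAux.eq_def]; simp only [if_pos hb]]
          simp only [List.map_cons]
          rw [show stackAux bad2 (f a :: rest.map f) (f b :: s.map f) (out.map f)
              = stackAux bad2 (f a :: rest.map f) (s.map f) (out.map f ++ [f b]) by
            rw [stackAux.eq_def];
            simp only [if_pos (show bad2 (f a :: f b :: s.map f) by simpa using hb2)]]
          have hs : (s.reverse ++ (a :: rest)).Sublist L := by
            refine List.Sublist.trans ?_ hsub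
            simp only [List.reverse_cons, List.append_assoc]
            exact List.Sublist.append_left (List.sublist_cons_self b _) _
          have := ih (a :: rest) s (out ++ [b])
            (by simp only [List.length_cons] at h ⊢; omega) hs
          simpa using this
      · have hb2 : ¬ bad2 ((a :: stack).map f) := fun hh => hb ((hbad _ hrev).mpr hh)
        rw [show stackAux bad1 (a :: rest) stack out = stackAux bad1 rest (a :: stack) out by
          rw [stackAux.eq_def]; simp only [if_neg hb]]
        simp only [List.map_cons]
        rw [show stackAux bad2 (f a :: rest.map f) (stack.map f) (out.map f)
            = stackAux bad2 (rest.map f) (f a :: stack.map f) (out.map f) by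
          rw [stackAux.eq_def];
          simp only [if_neg (show ¬ bad2 (f a :: stack.map f) by simpa using hb2)]]
        have hs : ((a :: stack).reverse ++ rest).Sublist L := by
          simpa [List.append_assoc] using hsub
        have := ih rest (a :: stack) out
          (by simp only [List.length_cons] at h ⊢; omega) hs
        simpa using this

/-- Complementation exchanges relative order appropriately. -/
private lemma sameRel_compl (n k : ℕ) (σ u : List ℕ) (hσn : σ.Nodup)
    (hσb : ∀ x ∈ σ, 1 ≤ x ∧ x ≤ k) (hun : u.Nodup) (hub : ∀ x ∈ u, 1 ≤ x ∧ x ≤ n) :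
    SameRel u (compl k σ) ↔ SameRel (u.map (fun x => n + 1 - x)) σ := by
  have hc : compl k σ = σ.map (fun x => k + 1 - x) := rfl
  rw [hc]
  have hclen : (σ.map (fun x => k + 1 - x)).length = σ.length := by simp
  constructor
  · rintro ⟨h1, h2⟩
    refine ⟨by simpa using h1.trans hclen, ?_⟩
    intro i j hij hj
    have hju : j < u.length := by simpa using hj
    have hiu : i < u.length := lt_trans hij hju
    have hjσ : j < σ.length := by rw [h1, hclen] at hju; exact hju
    have hiσ : i < σ.length := lt_trans hij hjσ
    have h2' := h2 i j hij hju
    rw [List.getD_eq_getElem u 0 hiu, List.getD_eq_getElem u 0 hju,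
      getD_map_eq _ σ i hiσ, getD_map_eq _ σ j hjσ] at h2'
    rw [getD_map_eq _ u i hiu, getD_map_eq _ u j hju,
      List.getD_eq_getElem σ 0 hiσ, List.getD_eq_getElem σ 0 hjσ]
    have hbu1 := hub _ (u.getElem_mem hiu)
    have hbu2 := hub _ (u.getElem_mem hju)
    have hbσ1 := hσb _ (σ.getElem_mem hiσ)
    have hbσ2 := hσb _ (σ.getElem_mem hjσ)
    have hneu : u[i] ≠ u[j] := by
      intro hh; exact absurd ((hun.getElem_inj_iff).mp hh) (Nat.ne_of_lt hij)
    have hneσ : σ[i] ≠ σ[j] := by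
      intro hh; exact absurd ((hσn.getElem_inj_iff).mp hh) (Nat.ne_of_lt hij)
    omega
  · rintro ⟨h1, h2⟩
    have h1' : u.length = σ.length := by simpa using h1
    refine ⟨h1'.trans hclen.symm, ?_⟩
    intro i j hij hj
    have hju : j < u.length := hj
    have hiu : i < u.length := lt_trans hij hju
    have hjσ : j < σ.length := h1' ▸ hju
    have hiσ : i < σ.length := lt_trans hij hjσ
    have h2' := h2 i j hij (by simpa using hju)
    rw [getD_map_eq _ u i hiu, getD_map_eq _ u j hju,
      List.getD_eq_getElem σ 0 hiσ, List.getD_eq_getElem σ 0 hjσ] at h2'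
    rw [List.getD_eq_getElem u 0 hiu, List.getD_eq_getElem u 0 hju,
      getD_map_eq _ σ i hiσ, getD_map_eq _ σ j hjσ]
    have hbu1 := hub _ (u.getElem_mem hiu)
    have hbu2 := hub _ (u.getElem_mem hju)
    have hbσ1 := hσb _ (σ.getElem_mem hiσ)
    have hbσ2 := hσb _ (σ.getElem_mem hjσ)
    have hneu : u[i] ≠ u[j] := by
      intro hh; exact absurd ((hun.getElem_inj_iff).mp hh) (Nat.ne_of_lt hij)
    have hneσ : σ[i] ≠ σ[j] := by
      intro hh; exact absurd ((hσn.getElem_inj_iff).mp hh) (Nat.ne_of_lt hij)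
    omega

/-- Consecutive containment of the complemented pattern corresponds to consecutive
containment of the pattern in the complemented list. -/
private lemma containsC_compl (n k : ℕ) (σ l : List ℕ) (hσn : σ.Nodup)
    (hσb : ∀ x ∈ σ, 1 ≤ x ∧ x ≤ k) (hln : l.Nodup) (hlb : ∀ x ∈ l, 1 ≤ x ∧ x ≤ n) :
    ContainsC l (compl k σ) ↔ ContainsC (l.map (fun x => n + 1 - x)) σ := by
  constructor
  · rintro ⟨u, hinf, hrel⟩
    refine ⟨u.map (fun x => n + 1 - x), hinf.map _, ?_⟩
    exact (sameRel_compl n k σ u hσn hσb (hinf.sublist.nodup hln)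
      (fun x hx => hlb x (hinf.sublist.mem hx))).mp hrel
  · rintro ⟨v, hinf, hrel⟩
    obtain ⟨s, t, hst⟩ := hinf
    have hst' : l.map (fun x => n + 1 - x) = s ++ (v ++ t) := by
      rw [← hst, List.append_assoc]
    rw [List.map_eq_append_iff] at hst'
    obtain ⟨s', w, hl1, hs', hw⟩ := hst'
    rw [List.map_eq_append_iff] at hw
    obtain ⟨u, t', hw2, hu, ht'⟩ := hw
    have hufix : u.IsInfix l := ⟨s', t', by rw [hl1, hw2, List.append_assoc]⟩
    refine ⟨u, hufix, ?_⟩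
    refine (sameRel_compl n k σ u hσn hσb (hufix.sublist.nodup hln)
      (fun x hx => hlb x (hufix.sublist.mem hx))).mpr ?_
    rw [hu]; exact hrel

private lemma bounds_of_perm {n : ℕ} {π : List ℕ} (hπ : IsPermList n π) :
    ∀ x ∈ π, 1 ≤ x ∧ x ≤ n := by
  intro x hx
  have := hπ.mem_iff.mp hx
  simp only [List.mem_map, List.mem_range] at this
  obtain ⟨y, hy, rfl⟩ := this
  omega

private lemma nodup_of_perm {n : ℕ} {π : List ℕ} (hπ : IsPermList n π) : π.Nodup := by
  refine hπ.nodup_iff.mpr ?_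
  exact (List.nodup_range : (List.range n).Nodup).map (fun a b => by omega)

/-- For σ ∈ S_k (k ≥ 2), SC_{comp(σ)} = comp ∘ SC_σ ∘ comp on each S_n. -/
theorem sc_comp_conjugate (k : ℕ) (hk : 2 ≤ k) (σ : List ℕ) (hσ : IsPermList k σ)
    (n : ℕ) (π : List ℕ) (hπ : IsPermList n π) :
    SCc (compl k σ) π = compl n (SCc σ (compl n π)) := by
  set f : ℕ → ℕ := fun x => n + 1 - x with hf
  have hσn : σ.Nodup := nodup_of_perm hσ
  have hσb : ∀ x ∈ σ, 1 ≤ x ∧ x ≤ k := bounds_of_perm hσ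
  have hπb : ∀ x ∈ π, 1 ≤ x ∧ x ≤ n := bounds_of_perm hπ
  have hπn : π.Nodup := nodup_of_perm hπ
  have hbad : ∀ l : List ℕ, l.reverse.Sublist π →
      (ContainsC l (compl k σ) ↔ ContainsC (l.map f) σ) := by
    intro l hl
    have hln : l.Nodup := by
      have := hl.nodup hπn
      simpa using this
    have hlb : ∀ x ∈ l, 1 ≤ x ∧ x ≤ n := fun x hx =>
      hπb x (hl.mem (by simpa using hx))
    exact containsC_compl n k σ l hσn hσb hln hlb
  have key := stack_conj (fun l => ContainsC l (compl k σ)) (fun l => ContainsC l σ) f π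
    hbad (2 * π.length) π [] [] (by simp) (by simp)
  simp only [List.map_nil] at key
  have hout : ∀ x ∈ stackAux (fun l => ContainsC l (compl k σ)) π [] [], 1 ≤ x ∧ x ≤ n := by
    intro x hx
    have hperm := stackAux_perm (fun l => ContainsC l (compl k σ)) (2 * π.length) π [] []
      (by simp)
    refine hπb x ?_
    have := hperm.mem_iff.mp hx
    simpa using this
  show stackAux (fun l => ContainsC l (compl k σ)) π [] []
      = (stackAux (fun l => ContainsC l σ) (π.map f) [] []).map f
  rw [key, List.map_map]
  symm
  refine (List.map_congr_left ?_).trans (List.map_id _)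
  intro x hx
  have := hout x hx
  simp only [Function.comp, hf, id]
  omega
end

section
/- If a permutation π avoids rev(σ) as a consecutive pattern, then SC_σ(π) = rev(π), the reverse of π. -/
open List Finset

attribute [local instance] Classical.propDecidable

lemma sameRel_reverse {u v : List ℕ} (hu : u.Nodup) (hv : v.Nodup) (h : SameRel u v) :
    SameRel u.reverse v.reverse := by
  obtain ⟨hlen, hrel⟩ := h
  refine ⟨by simp [hlen], ?_⟩
  intro i j hij hj
  rw [List.length_reverse] at hj
  have hi : i < u.length := lt_trans hij hj
  have hiv : i < v.length := hlen ▸ hi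
  have hjv : j < v.length := hlen ▸ hj
  have e1 : u.reverse.getD i 0 = u.getD (u.length - 1 - i) 0 := by
    rw [List.getD_eq_getElem _ _ (by simpa using hi), List.getD_eq_getElem _ _ (by omega),
      List.getElem_reverse]
  have e2 : u.reverse.getD j 0 = u.getD (u.length - 1 - j) 0 := by
    rw [List.getD_eq_getElem _ _ (by simpa using hj), List.getD_eq_getElem _ _ (by omega),
      List.getElem_reverse]
  have e3 : v.reverse.getD i 0 = v.getD (v.length - 1 - i) 0 := by
    rw [List.getD_eq_getElem _ _ (by simpa using hiv), List.getD_eq_getElem _ _ (by omega),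
      List.getElem_reverse]
  have e4 : v.reverse.getD j 0 = v.getD (v.length - 1 - j) 0 := by
    rw [List.getD_eq_getElem _ _ (by simpa using hjv), List.getD_eq_getElem _ _ (by omega),
      List.getElem_reverse]
  have hb1 : u.length - 1 - i < u.length := by omega
  have hb2 : u.length - 1 - j < u.length := by omega
  have hb3 : u.length - 1 - i < v.length := by omega
  have hb4 : u.length - 1 - j < v.length := by omega
  have hne : u.length - 1 - i ≠ u.length - 1 - j := by omega
  have key := hrel (u.length - 1 - j) (u.length - 1 - i) (by omega) hb1
  have hune : u.getD (u.length - 1 - i) 0 ≠ u.getD (u.length - 1 - j) 0 := by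
    rw [List.getD_eq_getElem _ _ hb1, List.getD_eq_getElem _ _ hb2]
    exact fun he => hne (hu.getElem_inj_iff.mp he)
  have hvne : v.getD (u.length - 1 - i) 0 ≠ v.getD (u.length - 1 - j) 0 := by
    rw [List.getD_eq_getElem _ _ hb3, List.getD_eq_getElem _ _ hb4]
    exact fun he => hne (hv.getElem_inj_iff.mp he)
  rw [e1, e2, e3, e4, ← hlen]
  omega

lemma containsC_reverse {l σ : List ℕ} (hl : l.Nodup) (hσ : σ.Nodup) (h : ContainsC l σ) :
    ContainsC l.reverse σ.reverse := by
  obtain ⟨u, hinf, hrel⟩ := h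
  exact ⟨u.reverse, List.reverse_infix.mpr hinf,
    sameRel_reverse (hl.sublist hinf.sublist) hσ hrel⟩

lemma containsC_of_infix {l l' σ : List ℕ} (hinf : l <:+: l') (h : ContainsC l σ) :
    ContainsC l' σ := by
  obtain ⟨u, hu, hrel⟩ := h
  exact ⟨u, hu.trans hinf, hrel⟩

lemma stackAux_of_avoids (σ : List ℕ) (hσ : σ.Nodup) :
    ∀ rest stack out : List ℕ, (stack.reverse ++ rest).Nodup →
      ¬ ContainsC (stack.reverse ++ rest) σ.reverse →
      stackAux (fun l => ContainsC l σ) rest stack out = out ++ rest.reverse ++ stack := by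
  intro rest
  induction rest with
  | nil => intro stack out _ _; rw [stackAux]; simp
  | cons a rest ih =>
    intro stack out hnd h
    have hsub : stack.reverse ++ [a] <+ stack.reverse ++ a :: rest :=
      (List.append_sublist_append_left _).mpr
        (List.cons_sublist_cons.mpr (List.nil_sublist _))
    have hastack : (a :: stack).Nodup := by
      rw [← List.nodup_reverse]
      simpa using hnd.sublist hsub
    have hnotbad : ¬ ContainsC (a :: stack) σ := by
      intro hbad
      have h2 : ContainsC (a :: stack).reverse σ.reverse :=
        containsC_reverse hastack hσ hbad
      refine h (containsC_of_infix ?_ h2)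
      exact ⟨[], rest, by simp⟩
    rw [stackAux.eq_def]
    simp only [if_neg hnotbad]
    rw [ih (a :: stack) out (by simpa using hnd) (by simpa using h)]
    simp

/-- If π avoids rev(σ) as a consecutive pattern, then SC_σ(π) = rev(π). -/
theorem sc_of_avoids_rev (k : ℕ) (hk : 2 ≤ k) (σ : List ℕ) (hσ : IsPermList k σ)
    (n : ℕ) (π : List ℕ) (hπ : IsPermList n π) (h : AvoidsC π σ.reverse) :
    SCc σ π = π.reverse := by
  have hσnd : σ.Nodup := hσ.nodup_iff.mpr (by
    apply List.Nodup.map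
    · exact fun a b hab => by omega
    · exact List.nodup_range)
  have hπnd : π.Nodup := hπ.nodup_iff.mpr (by
    apply List.Nodup.map
    · exact fun a b hab => by omega
    · exact List.nodup_range)
  have := stackAux_of_avoids σ hσnd π [] [] (by simpa using hπnd) (by simpa [AvoidsC] using h)
  simpa [SCc, SCgen] using this
end

section
/- The set Sort(SC_{12}) of permutations π with SC_{12}(π) avoiding the classical pattern 231 is exactly the set Av(213) of permutations classically avoiding 213. -/
open List Finset

attribute [local instance] Classical.propDecidable

/-! ### Auxiliary development -/

def aux : List ℕ → List ℕ → List ℕ → List ℕ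
  | [], s, out => out ++ s
  | a :: r, [], out => aux r [a] out
  | a :: r, b :: s, out => if a < b then aux (a :: r) s (out ++ [b]) else aux r (a :: b :: s) out
  termination_by i s _ => 2 * i.length + s.length
  decreasing_by all_goals simp [List.length_cons] <;> omega

lemma sameRel_12 {x y : ℕ} (h : x < y) : SameRel [x, y] [1, 2] := by
  refine ⟨rfl, ?_⟩
  intro i j hij hj
  simp at hj
  interval_cases j <;> interval_cases i <;> simp [List.getD] <;> omega

lemma sameRel_231 {b c a : ℕ} (h1 : a < b) (h2 : b < c) : SameRel [b, c, a] [2, 3, 1] := by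
  refine ⟨rfl, ?_⟩
  intro i j hij hj
  simp at hj
  interval_cases j <;> interval_cases i <;> simp [List.getD] <;> omega

lemma sameRel_213 {b a c : ℕ} (h1 : a < b) (h2 : b < c) : SameRel [b, a, c] [2, 1, 3] := by
  refine ⟨rfl, ?_⟩
  intro i j hij hj
  simp at hj
  interval_cases j <;> interval_cases i <;> simp [List.getD] <;> omega

lemma not_containsC_12 {l : List ℕ} (h : l.Pairwise (· > ·)) : ¬ ContainsC l [1, 2] := by
  rintro ⟨u, hinf, hlen, hrel⟩
  obtain ⟨x, y, rfl⟩ : ∃ x y, u = [x, y] := by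
    match u, hlen with
    | [x, y], _ => exact ⟨x, y, rfl⟩
  have hxy : x < y := by
    have := (hrel 0 1 (by omega) (by simp)).2
    simp [List.getD] at this; exact this
  have : x > y := by
    have := h.sublist hinf.sublist
    simpa using this
  omega

lemma containsC_12 {a b : ℕ} (s : List ℕ) (h : a < b) : ContainsC (a :: b :: s) [1, 2] :=
  ⟨[a, b], ⟨[], s, rfl⟩, sameRel_12 h⟩

lemma stack_eq : ∀ i s o : List ℕ, s.Pairwise (· > ·) → (i ++ s).Nodup →
    stackAux (fun l => ContainsC l [1, 2]) i s o = aux i s o := by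
  intro i s o
  induction i, s, o using aux.induct with
  | case1 s o =>
    intro _ _; rw [stackAux, aux]
  | case2 a r o ih =>
    intro _ hnd
    have hb : ¬ ContainsC [a] [1, 2] := not_containsC_12 (by simp)
    rw [stackAux, aux, if_neg hb]
    refine ih (by simp) ?_
    have h1 : (a :: r).Nodup := by simpa using hnd
    exact h1.perm (List.perm_append_singleton a r).symm
  | case3 a r b s o hab ih =>
    intro hs hnd
    have hb : ContainsC (a :: b :: s) [1, 2] := containsC_12 s hab
    rw [stackAux, aux, if_pos hb, if_pos hab]
    refine ih (hs.sublist (List.sublist_cons_self b s)) ?_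
    exact hnd.sublist (List.Sublist.append (List.Sublist.refl _) (List.sublist_cons_self b s))
  | case4 a r b s o hab ih =>
    intro hs hnd
    have hane : a ≠ b := by
      have hd := List.disjoint_of_nodup_append hnd
      intro h; exact hd (List.mem_cons_self : a ∈ a :: r) (h ▸ (List.mem_cons_self : b ∈ b :: s))
    have hab' : a > b := by omega
    have hp : (a :: b :: s).Pairwise (· > ·) := by
      refine List.pairwise_cons.2 ⟨?_, hs⟩
      intro x hx
      rcases List.mem_cons.1 hx with rfl | hx
      · exact hab'
      · exact lt_trans ((List.pairwise_cons.1 hs).1 x hx) hab'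
    have hb : ¬ ContainsC (a :: b :: s) [1, 2] := not_containsC_12 hp
    rw [stackAux, aux, if_neg hb, if_neg hab]
    refine ih hp ?_
    have h1 : (a :: (r ++ b :: s)).Nodup := by simpa using hnd
    exact h1.perm List.perm_middle.symm

lemma lemB : ∀ i s o : List ℕ, s.Pairwise (· > ·) → o.Pairwise (· > ·) →
    (∀ x ∈ o, ∀ y ∈ s, x > y) → (∀ x ∈ o, ∀ y ∈ i, x > y) →
    (i ++ s).Nodup → ¬ ContainsPat i [2, 1, 3] →
    (∀ b ∈ s, ∀ u v : ℕ, [u, v].Sublist i → u < b → v < b) →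
    (aux i s o).Pairwise (· > ·) := by
  intro i s o
  induction i, s, o using aux.induct with
  | case1 s o =>
    intro hs ho hos _ _ _ _
    rw [aux]
    exact List.pairwise_append.2 ⟨ho, hs, hos⟩
  | case2 a r o ih =>
    intro _ ho hos hoi hnd hav _
    rw [aux]
    have hnd' : (a :: r).Nodup := by simpa using hnd
    refine ih (by simp) ho ?_ ?_ ?_ ?_ ?_
    · intro x hx y hy
      simp at hy
      exact hoi x hx y (by simp [hy])
    · intro x hx y hy; exact hoi x hx y (List.mem_cons_of_mem a hy)
    · exact hnd'.perm (List.perm_append_singleton a r).symm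
    · intro hc
      exact hav (hc.imp fun u ⟨hu, hrel⟩ => ⟨hu.trans (List.sublist_cons_self a r), hrel⟩)
    · intro b hb u v huv hub
      simp at hb; subst hb
      by_contra hvb
      have hvr : v ∈ r := (huv.subset (by simp))
      have hvne : v ≠ b := by
        intro h; subst h; exact (List.nodup_cons.1 hnd').1 hvr
      have hbv : b < v := by omega
      exact hav ⟨[b, u, v], List.cons_sublist_cons.2 huv, sameRel_213 hub hbv⟩
  | case3 a r b s o hab ih =>
    intro hs ho hos hoi hnd hav h6
    rw [aux, if_pos hab]
    have hbs : ∀ y ∈ s, b > y := (List.pairwise_cons.1 hs).1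
    refine ih ((List.pairwise_cons.1 hs).2) ?_ ?_ ?_ ?_ hav ?_
    · refine List.pairwise_append.2 ⟨ho, by simp, ?_⟩
      intro x hx y hy; simp at hy
      exact hos x hx y (by simp [hy])
    · intro x hx y hy
      rcases List.mem_append.1 hx with hx | hx
      · exact hos x hx y (List.mem_cons_of_mem b hy)
      · simp at hx; exact hx ▸ hbs y hy
    · intro x hx y hy
      rcases List.mem_append.1 hx with hx | hx
      · exact hoi x hx y hy
      · simp at hx
        rcases List.mem_cons.1 hy with rfl | hy
        · omega
        · have := h6 b (by simp) a y
            (List.cons_sublist_cons.2 (List.singleton_sublist.2 hy)) hab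
          omega
    · exact hnd.sublist (List.Sublist.append (List.Sublist.refl _) (List.sublist_cons_self b s))
    · intro b' hb' u v huv hub
      exact h6 b' (List.mem_cons_of_mem b hb') u v huv hub
  | case4 a r b s o hab ih =>
    intro hs ho hos hoi hnd hav h6
    rw [aux, if_neg hab]
    have hane : a ≠ b := by
      have hd := List.disjoint_of_nodup_append hnd
      intro h; exact hd (List.mem_cons_self : a ∈ a :: r) (h ▸ (List.mem_cons_self : b ∈ b :: s))
    have hab' : a > b := by omega
    have hagt : ∀ x ∈ b :: s, a > x := by
      intro x hx
      rcases List.mem_cons.1 hx with rfl | hx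
      · exact hab'
      · exact lt_trans ((List.pairwise_cons.1 hs).1 x hx) hab'
    have hndar : (a :: r).Nodup := (List.nodup_append.1 hnd).1
    refine ih (List.pairwise_cons.2 ⟨hagt, hs⟩) ho ?_ ?_ ?_ ?_ ?_
    · intro x hx y hy
      rcases List.mem_cons.1 hy with rfl | hy
      · exact hoi x hx y (List.mem_cons_self : y ∈ y :: r)
      · exact hos x hx y hy
    · intro x hx y hy; exact hoi x hx y (List.mem_cons_of_mem a hy)
    · have h1 : (a :: (r ++ b :: s)).Nodup := by simpa using hnd
      exact h1.perm List.perm_middle.symm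
    · intro hc
      exact hav (hc.imp fun u ⟨hu, hrel⟩ => ⟨hu.trans (List.sublist_cons_self a r), hrel⟩)
    · intro b' hb' u v huv hub
      rcases List.mem_cons.1 hb' with rfl | hb'
      · by_contra hvb
        have hvr : v ∈ r := (huv.subset (by simp))
        have hvne : v ≠ b' := by
          intro h; subst h; exact (List.nodup_cons.1 hndar).1 hvr
        have hbv : b' < v := by omega
        exact hav ⟨[b', u, v], List.cons_sublist_cons.2 huv, sameRel_213 hub hbv⟩
      · exact h6 b' hb' u v (huv.trans (List.sublist_cons_self a r)) hub

def Fphase (i s o : List ℕ) : Prop :=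
  ∃ b a c : ℕ, a < b ∧ b < c ∧
    ([b, a, c].Sublist i ∨
     (b ∈ s ∧ [a, c].Sublist i) ∨
     (b ∈ o ∧ c ∈ i ∧ (a ∈ s ∨ [a, c].Sublist i)) ∨
     (b ∈ o ∧ [c, a].Sublist s) ∨
     ([b, c].Sublist o ∧ a ∈ s) ∨
     [b, c, a].Sublist o)

lemma lemA : ∀ i s o : List ℕ, s.Pairwise (· > ·) → (i ++ s).Nodup → Fphase i s o →
    ContainsPat (aux i s o) [2, 3, 1] := by
  intro i s o
  induction i, s, o using aux.induct with
  | case1 s o =>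
    intro _ _ hF
    rw [aux]
    obtain ⟨b, a, c, hab, hbc, hF⟩ := hF
    rcases hF with h | h | h | h | h | h
    · exact absurd (List.sublist_nil.1 h) (by simp)
    · exact absurd (List.sublist_nil.1 h.2) (by simp)
    · simp at h
    · exact ⟨[b, c, a], (List.singleton_sublist.2 h.1).append h.2, sameRel_231 hab hbc⟩
    · exact ⟨[b, c, a], h.1.append (List.singleton_sublist.2 h.2), sameRel_231 hab hbc⟩
    · exact ⟨[b, c, a], h.trans (List.sublist_append_left o s), sameRel_231 hab hbc⟩
  | case2 a r o ih =>
    intro _ hnd hF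
    rw [aux]
    have hnd' : (a :: r).Nodup := by simpa using hnd
    have hnd2 : (r ++ [a]).Nodup := hnd'.perm (List.perm_append_singleton a r).symm
    refine ih (by simp) hnd2 ?_
    obtain ⟨b, a0, c, hab, hbc, hF⟩ := hF
    rcases hF with h | h | h | h | h | h
    · rcases List.sublist_cons_iff.1 h with h | ⟨tl, heq, htl⟩
      · exact ⟨b, a0, c, hab, hbc, Or.inl h⟩
      · obtain ⟨rfl, rfl⟩ : b = a ∧ tl = [a0, c] := by
          constructor <;> injection heq with h1 h2 <;> simp_all
        exact ⟨b, a0, c, hab, hbc, Or.inr (Or.inl ⟨by simp, htl⟩)⟩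
    · simp at h
    · obtain ⟨hbo, hc, ha⟩ := h
      rcases ha with ha | ha
      · simp at ha
      · rcases List.sublist_cons_iff.1 ha with h' | ⟨tl, heq, htl⟩
        · exact ⟨b, a0, c, hab, hbc, Or.inr (Or.inr (Or.inl
            ⟨hbo, h'.subset (by simp), Or.inr h'⟩))⟩
        · obtain ⟨rfl, rfl⟩ : a0 = a ∧ tl = [c] := by
            constructor <;> injection heq with h1 h2 <;> simp_all
          exact ⟨b, a0, c, hab, hbc, Or.inr (Or.inr (Or.inl
            ⟨hbo, (List.singleton_sublist.1 htl), Or.inl (by simp)⟩))⟩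
    · exact absurd (List.sublist_nil.1 h.2) (by simp)
    · simp at h
    · exact ⟨b, a0, c, hab, hbc, by tauto⟩
  | case3 a r b s o hab ih =>
    intro hs hnd hF
    rw [aux, if_pos hab]
    have hs' : s.Pairwise (· > ·) := (List.pairwise_cons.1 hs).2
    have hnd2 : ((a :: r) ++ s).Nodup :=
      hnd.sublist (List.Sublist.append (List.Sublist.refl _) (List.sublist_cons_self b s))
    refine ih hs' hnd2 ?_
    obtain ⟨b0, a0, c, hab0, hbc0, hF⟩ := hF
    rcases hF with h | h | h | h | h | h
    · exact ⟨b0, a0, c, hab0, hbc0, Or.inl h⟩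
    · obtain ⟨hb0, hac⟩ := h
      rcases List.mem_cons.1 hb0 with rfl | hb0
      · exact ⟨b0, a0, c, hab0, hbc0, Or.inr (Or.inr (Or.inl
          ⟨by simp, hac.subset (by simp), Or.inr hac⟩))⟩
      · exact ⟨b0, a0, c, hab0, hbc0, Or.inr (Or.inl ⟨hb0, hac⟩)⟩
    · obtain ⟨hb0, hc, ha0⟩ := h
      rcases ha0 with ha0 | ha0
      · rcases List.mem_cons.1 ha0 with rfl | ha0
        · -- a0 = b popped; replace a0 by a
          have hac : a < c := by omega
          have hcr : c ∈ r := by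
            rcases List.mem_cons.1 hc with rfl | h'
            · omega
            · exact h'
          exact ⟨b0, a, c, by omega, hbc0, Or.inr (Or.inr (Or.inl
            ⟨List.mem_append_left _ hb0, hc,
              Or.inr (List.cons_sublist_cons.2 (List.singleton_sublist.2 hcr))⟩))⟩
        · exact ⟨b0, a0, c, hab0, hbc0, Or.inr (Or.inr (Or.inl
            ⟨List.mem_append_left _ hb0, hc, Or.inl ha0⟩))⟩
      · exact ⟨b0, a0, c, hab0, hbc0, Or.inr (Or.inr (Or.inl
          ⟨List.mem_append_left _ hb0, hc, Or.inr ha0⟩))⟩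
    · obtain ⟨hb0, hca⟩ := h
      rcases List.sublist_cons_iff.1 hca with h' | ⟨tl, heq, htl⟩
      · exact ⟨b0, a0, c, hab0, hbc0, Or.inr (Or.inr (Or.inr (Or.inl
          ⟨List.mem_append_left _ hb0, h'⟩)))⟩
      · obtain ⟨rfl, rfl⟩ : c = b ∧ tl = [a0] := by
          constructor <;> injection heq with h1 h2 <;> simp_all
        exact ⟨b0, a0, c, hab0, hbc0, Or.inr (Or.inr (Or.inr (Or.inr (Or.inl
          ⟨(List.singleton_sublist.2 hb0).append (List.Sublist.refl [c]),
            List.singleton_sublist.1 htl⟩))))⟩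
    · obtain ⟨hbc', ha0⟩ := h
      rcases List.mem_cons.1 ha0 with rfl | ha0
      · exact ⟨b0, a0, c, hab0, hbc0, Or.inr (Or.inr (Or.inr (Or.inr (Or.inr
          (hbc'.append (List.Sublist.refl [a0]))))))⟩
      · exact ⟨b0, a0, c, hab0, hbc0, Or.inr (Or.inr (Or.inr (Or.inr (Or.inl
          ⟨hbc'.trans (List.sublist_append_left o [b]), ha0⟩))))⟩
    · exact ⟨b0, a0, c, hab0, hbc0, Or.inr (Or.inr (Or.inr (Or.inr (Or.inr
        (h.trans (List.sublist_append_left o [b]))))))⟩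
  | case4 a r b s o hnlt ih =>
    intro hs hnd hF
    rw [aux, if_neg hnlt]
    have hane : a ≠ b := by
      have hd := List.disjoint_of_nodup_append hnd
      intro h; exact hd (List.mem_cons_self : a ∈ a :: r) (h ▸ (List.mem_cons_self : b ∈ b :: s))
    have hab' : a > b := by omega
    have hagt : ∀ x ∈ b :: s, a > x := by
      intro x hx
      rcases List.mem_cons.1 hx with rfl | hx
      · exact hab'
      · exact lt_trans ((List.pairwise_cons.1 hs).1 x hx) hab'
    have hndar : (a :: r).Nodup := (List.nodup_append.1 hnd).1
    have hanr : a ∉ r := (List.nodup_cons.1 hndar).1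
    have hp : (a :: b :: s).Pairwise (· > ·) := List.pairwise_cons.2 ⟨hagt, hs⟩
    have hnd2 : (r ++ a :: b :: s).Nodup := by
      have h1 : (a :: (r ++ b :: s)).Nodup := by simpa using hnd
      exact h1.perm List.perm_middle.symm
    refine ih hp hnd2 ?_
    obtain ⟨b0, a0, c, hab0, hbc0, hF⟩ := hF
    rcases hF with h | h | h | h | h | h
    · rcases List.sublist_cons_iff.1 h with h' | ⟨tl, heq, htl⟩
      · exact ⟨b0, a0, c, hab0, hbc0, Or.inl h'⟩
      · obtain ⟨rfl, rfl⟩ : b0 = a ∧ tl = [a0, c] := by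
          constructor <;> injection heq with h1 h2 <;> simp_all
        exact ⟨b0, a0, c, hab0, hbc0, Or.inr (Or.inl ⟨by simp, htl⟩)⟩
    · obtain ⟨hb0, hac⟩ := h
      rcases List.sublist_cons_iff.1 hac with h' | ⟨tl, heq, htl⟩
      · exact ⟨b0, a0, c, hab0, hbc0, Or.inr (Or.inl ⟨List.mem_cons_of_mem a hb0, h'⟩)⟩
      · obtain ⟨rfl, rfl⟩ : a0 = a ∧ tl = [c] := by
          constructor <;> injection heq with h1 h2 <;> simp_all
        exact absurd (hagt b0 hb0) (by omega)
    · obtain ⟨hb0, hc, ha0⟩ := h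
      rcases List.mem_cons.1 hc with rfl | hcr
      · -- c = a is pushed
        rcases ha0 with ha0 | ha0
        · exact ⟨b0, a0, c, hab0, hbc0, Or.inr (Or.inr (Or.inr (Or.inl
            ⟨hb0, List.cons_sublist_cons.2 (List.singleton_sublist.2 ha0)⟩)))⟩
        · exfalso
          rcases List.sublist_cons_iff.1 ha0 with h' | ⟨tl, heq, htl⟩
          · exact hanr (h'.subset (by simp))
          · obtain ⟨rfl, rfl⟩ : a0 = c ∧ tl = [c] := by
              constructor <;> injection heq with h1 h2 <;> simp_all
            omega
      · rcases ha0 with ha0 | ha0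
        · exact ⟨b0, a0, c, hab0, hbc0, Or.inr (Or.inr (Or.inl
            ⟨hb0, hcr, Or.inl (List.mem_cons_of_mem a ha0)⟩))⟩
        · rcases List.sublist_cons_iff.1 ha0 with h' | ⟨tl, heq, htl⟩
          · exact ⟨b0, a0, c, hab0, hbc0, Or.inr (Or.inr (Or.inl ⟨hb0, hcr, Or.inr h'⟩))⟩
          · obtain ⟨rfl, rfl⟩ : a0 = a ∧ tl = [c] := by
              constructor <;> injection heq with h1 h2 <;> simp_all
            exact ⟨b0, a0, c, hab0, hbc0, Or.inr (Or.inr (Or.inl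
              ⟨hb0, hcr, Or.inl (by simp)⟩))⟩
    · exact ⟨b0, a0, c, hab0, hbc0, Or.inr (Or.inr (Or.inr (Or.inl
        ⟨h.1, h.2.trans (List.sublist_cons_self a (b :: s))⟩)))⟩
    · exact ⟨b0, a0, c, hab0, hbc0, Or.inr (Or.inr (Or.inr (Or.inr (Or.inl
        ⟨h.1, List.mem_cons_of_mem a h.2⟩))))⟩
    · exact ⟨b0, a0, c, hab0, hbc0, by tauto⟩


lemma decode213 {l : List ℕ} (hnd : l.Nodup) (h : ContainsPat l [2, 1, 3]) :
    ∃ b a c : ℕ, a < b ∧ b < c ∧ [b, a, c].Sublist l := by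
  obtain ⟨u, hu, hlen, hrel⟩ := h
  obtain ⟨b, a, c, rfl⟩ : ∃ b a c, u = [b, a, c] := by
    match u, hlen with
    | [b, a, c], _ => exact ⟨b, a, c, rfl⟩
  have hbc : b < c := by
    have := (hrel 0 2 (by omega) (by simp)).2
    simp [List.getD] at this; exact this
  have hba : a ≤ b := by
    have := (hrel 0 1 (by omega) (by simp)).1
    simp [List.getD] at this; exact this
  have hne : b ≠ a := by
    have := hnd.sublist hu
    simp at this; exact this.1.1
  exact ⟨b, a, c, by omega, hbc, hu⟩

lemma avoid231_of_pairwise {l : List ℕ} (h : l.Pairwise (· > ·)) : AvoidsPat l [2, 3, 1] := by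
  rintro ⟨u, hu, hlen, hrel⟩
  obtain ⟨x, y, z, rfl⟩ : ∃ x y z, u = [x, y, z] := by
    match u, hlen with
    | [x, y, z], _ => exact ⟨x, y, z, rfl⟩
  have hxy : x < y := by
    have := (hrel 0 1 (by omega) (by simp)).2
    simp [List.getD] at this; exact this
  have : x > y := by
    have := h.sublist hu
    simp at this; exact this.1.1
  omega


/-- Sort(SC_{12}) = Av(213). -/
theorem sort_sc12_eq_av213 (n : ℕ) (π : List ℕ) (hπ : IsPermList n π) :
    AvoidsPat (SCc [1, 2] π) [2, 3, 1] ↔ AvoidsPat π [2, 1, 3] := by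
  have hnd : π.Nodup := by
    refine hπ.nodup_iff.2 ?_
    exact (List.nodup_range : (List.range n).Nodup).map (fun a b h => by omega)
  have heq : SCc [1, 2] π = aux π [] [] := by
    show stackAux (fun l => ContainsC l [1, 2]) π [] [] = aux π [] []
    exact stack_eq π [] [] (by simp) (by simpa using hnd)
  constructor
  · intro hav hc
    obtain ⟨b, a, c, hab, hbc, hsub⟩ := decode213 hnd hc
    exact hav (heq ▸ lemA π [] [] (by simp) (by simpa using hnd)
      ⟨b, a, c, hab, hbc, Or.inl hsub⟩)
  · intro hav
    rw [heq]
    exact avoid231_of_pairwise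
      (lemB π [] [] (by simp) (by simp) (by simp) (by simp) (by simpa using hnd) hav (by simp))
end

section
/- Let σ ∈ S_k with k ≥ 3 such that both σ and σ̂ (σ with first two entries swapped) contain 231 classically. Then Sort(SC_σ) = Av(132), the class of 132-avoiding permutations. -/
open List Finset

attribute [local instance] Classical.propDecidable

/-- strict all-pairs relative order equivalence -/
def SR (u v : List ℕ) : Prop :=
  u.length = v.length ∧ ∀ i j, i < u.length → j < u.length →
    (u.getD i 0 < u.getD j 0 ↔ v.getD i 0 < v.getD j 0)

lemma SR.sameRel {u v : List ℕ} (h : SR u v) : SameRel u v :=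
  ⟨h.1, fun i j hij hj => h.2 i j (lt_trans hij hj) hj⟩

lemma SR.trans {u v w : List ℕ} (h1 : SR u v) (h2 : SR v w) : SR u w :=
  ⟨h1.1.trans h2.1, fun i j hi hj =>
    (h1.2 i j hi hj).trans (h2.2 i j (h1.1 ▸ hi) (h1.1 ▸ hj))⟩

lemma SR_of_sameRel {u v : List ℕ} (hu : u.Nodup) (hv : v.Nodup) (h : SameRel u v) :
    SR u v := by
  obtain ⟨hl, hrel⟩ := h
  refine ⟨hl, fun i j hi hj => ?_⟩
  rcases Nat.lt_trichotomy i j with hij | rfl | hij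
  · exact hrel i j hij hj
  · simp
  · have h1 := hrel j i hij hi
    have hne_u : u.getD i 0 ≠ u.getD j 0 := by
      rw [List.getD_eq_getElem _ _ hi, List.getD_eq_getElem _ _ hj]
      rw [Ne, hu.getElem_inj_iff]; omega
    have hne_v : v.getD i 0 ≠ v.getD j 0 := by
      rw [List.getD_eq_getElem _ _ (hl ▸ hi), List.getD_eq_getElem _ _ (hl ▸ hj)]
      rw [Ne, hv.getElem_inj_iff]; omega
    constructor
    · intro hlt
      rcases Nat.lt_trichotomy (v.getD i 0) (v.getD j 0) with h' | h' | h'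
      · exact h'
      · exact absurd h' hne_v
      · exact absurd (h1.mpr h') (by omega)
    · intro hlt
      rcases Nat.lt_trichotomy (u.getD i 0) (u.getD j 0) with h' | h' | h'
      · exact h'
      · exact absurd h' hne_u
      · exact absurd (h1.mp h') (by omega)

lemma getD_rev (l : List ℕ) {i : ℕ} (h : i < l.length) :
    l.reverse.getD i 0 = l.getD (l.length - 1 - i) 0 := by
  rw [List.getD_eq_getElem _ _ (by simpa using h),
      List.getD_eq_getElem _ _ (by omega), List.getElem_reverse]

lemma SR.reverse {u v : List ℕ} (h : SR u v) : SR u.reverse v.reverse := by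
  obtain ⟨hl, hrel⟩ := h
  refine ⟨by simp [hl], fun i j hi hj => ?_⟩
  simp only [List.length_reverse] at hi hj
  rw [getD_rev u hi, getD_rev u hj, getD_rev v (hl ▸ hi), getD_rev v (hl ▸ hj), ← hl]
  exact hrel _ _ (by omega) (by omega)

lemma SR_swap01 {x y p q : ℕ} {m m' : List ℕ} (h : SR (x :: y :: m) (p :: q :: m')) :
    SR (y :: x :: m) (q :: p :: m') := by
  obtain ⟨hl, hrel⟩ := h
  simp only [List.length_cons] at hl
  set f : ℕ → ℕ := fun i => if i = 0 then 1 else if i = 1 then 0 else i with hf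
  have key : ∀ (a b : ℕ) (t : List ℕ) (i : ℕ),
      (b :: a :: t).getD i 0 = (a :: b :: t).getD (f i) 0 := by
    intro a b t i
    match i with
    | 0 => simp [hf]
    | 1 => simp [hf]
    | (i+2) => simp [hf]
  have hfl : ∀ i, i < m.length + 2 → f i < m.length + 2 := by
    intro i hi
    simp only [hf]
    split_ifs <;> omega
  refine ⟨by simp [hl], fun i j hi hj => ?_⟩
  simp only [List.length_cons] at hi hj
  rw [key x y m i, key x y m j, key p q m' i, key p q m' j]
  exact hrel (f i) (f j) (by simp only [List.length_cons]; exact hfl i hi) (by simp only [List.length_cons]; exact hfl j hj)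

lemma SR_extract {u v w : List ℕ} (h : SR u v) (hw : w.Sublist v) :
    ∃ w', w'.Sublist u ∧ SR w' w := by
  obtain ⟨hl, hrel⟩ := h
  obtain ⟨is, rfl, hp⟩ := List.sublist_eq_map_getElem hw
  refine ⟨(is.map (Fin.cast hl.symm)).map (fun x => u[x]), List.map_getElem_sublist ?_, ?_, ?_⟩
  · exact hp.map _ (fun a b hab => hab)
  · simp
  · intro i j hi hj
    simp only [List.length_map] at hi hj
    rw [List.getD_eq_getElem _ _ (by simpa using hi),
        List.getD_eq_getElem _ _ (by simpa using hj),
        List.getD_eq_getElem _ _ (by simpa using hi),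
        List.getD_eq_getElem _ _ (by simpa using hj)]
    simp only [List.getElem_map, Fin.coe_cast]
    have h1 : ((is[i] : Fin v.length) : ℕ) < u.length := by rw [hl]; exact (is[i]).isLt
    have h2 : ((is[j] : Fin v.length) : ℕ) < u.length := by rw [hl]; exact (is[j]).isLt
    have h3 := hrel _ _ h1 h2
    rw [List.getD_eq_getElem _ _ h1, List.getD_eq_getElem _ _ h2,
        List.getD_eq_getElem _ _ (by omega : ((is[i] : Fin v.length) : ℕ) < v.length),
        List.getD_eq_getElem _ _ (by omega : ((is[j] : Fin v.length) : ℕ) < v.length)] at h3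
    exact h3

lemma stackAux_nil (bad) (s o : List ℕ) : stackAux bad [] s o = o ++ s := by
  rw [stackAux.eq_def]

lemma stackAux_push (bad) (a : ℕ) (l s o : List ℕ) (h : ¬ bad (a :: s)) :
    stackAux bad (a :: l) s o = stackAux bad l (a :: s) o := by
  rw [stackAux.eq_def]; dsimp only; rw [if_neg h]

lemma stackAux_pop (bad) (a x : ℕ) (l s o : List ℕ) (h : bad (a :: x :: s)) :
    stackAux bad (a :: l) (x :: s) o = stackAux bad (a :: l) s (o ++ [x]) := by
  rw [stackAux.eq_def]; dsimp only; rw [if_pos h]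

/-- If every push along the way is allowed, a block of input just gets pushed. -/
lemma pushrun (bad : List ℕ → Prop) :
    ∀ (p : List ℕ) (l s o : List ℕ),
      (∀ q x, (q ++ [x]) <+: p → ¬ bad (x :: (q.reverse ++ s))) →
      stackAux bad (p ++ l) s o = stackAux bad l (p.reverse ++ s) o := by
  intro p
  induction p with
  | nil => intro l s o _; simp
  | cons a p' ih =>
    intro l s o h
    have h0 : ¬ bad (a :: s) := by
      have := h [] a ⟨p', rfl⟩
      simpa using this
    have e : (a :: p').reverse ++ s = p'.reverse ++ (a :: s) := by simp
    rw [List.cons_append, stackAux_push bad a (p' ++ l) s o h0, e]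
    exact ih l (a :: s) o (fun q x hq => by
      have h2 := h (a :: q) x (by rw [List.cons_append]; exact List.cons_prefix_cons.mpr ⟨rfl, hq⟩)
      simpa [List.append_assoc] using h2)

/-- The output extends `out`, and the current stack appears in it as a subsequence. -/
lemma trace (bad : List ℕ → Prop) :
    ∀ (N : ℕ) (l s o : List ℕ), 2 * l.length + s.length ≤ N →
      ∃ r, stackAux bad l s o = o ++ r ∧ s.Sublist r := by
  intro N
  induction N using Nat.strong_induction_on with
  | _ N ih =>
    intro l s o hN
    match l with
    | [] => exact ⟨s, stackAux_nil bad s o, List.Sublist.refl s⟩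
    | a :: rest =>
      by_cases hb : bad (a :: s)
      · match s with
        | [] =>
          rw [stackAux.eq_def]; dsimp only; rw [if_pos hb]
          obtain ⟨r, hr, _⟩ := ih (2 * rest.length + 1)
            (by simp only [List.length_cons] at hN; omega) rest [a] o (le_refl _)
          exact ⟨r, hr, List.nil_sublist r⟩
        | x :: s' =>
          rw [stackAux_pop bad a x rest s' o hb]
          obtain ⟨r, hr, hs⟩ := ih (2 * (a :: rest).length + s'.length)
            (by simp only [List.length_cons] at hN ⊢; omega) (a :: rest) s' (o ++ [x]) (le_refl _)
          exact ⟨x :: r, by rw [hr]; simp, hs.cons₂ x⟩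
      · rw [stackAux_push bad a rest s o hb]
        obtain ⟨r, hr, hs⟩ := ih (2 * rest.length + (a :: s).length)
          (by simp only [List.length_cons] at hN ⊢; omega) rest (a :: s) o (le_refl _)
        exact ⟨r, hr, (List.sublist_cons_self a s).trans hs⟩

/-- A burst of pops: pops happen until the pending entry can be pushed. -/
lemma burst (bad : List ℕ → Prop) (hshort : ∀ x, ¬ bad [x]) (a : ℕ) (l : List ℕ) :
    ∀ (t o : List ℕ), bad (a :: t) →
      ∃ d x t', t = d ++ x :: t' ∧ bad (a :: x :: t') ∧
        stackAux bad (a :: l) t o = stackAux bad l (a :: t') (o ++ d ++ [x]) := by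
  intro t
  induction t with
  | nil => intro o hb; exact absurd hb (hshort a)
  | cons y t2 ih =>
    intro o hb
    by_cases hb2 : bad (a :: t2)
    · obtain ⟨d, x, t', ht, hbx, he⟩ := ih (o ++ [y]) hb2
      refine ⟨y :: d, x, t', by rw [ht, List.cons_append], hbx, ?_⟩
      rw [stackAux_pop bad a y l t2 o hb, he]
      congr 1
      simp
    · refine ⟨[], y, t2, rfl, hb, ?_⟩
      rw [stackAux_pop bad a y l t2 o hb, stackAux_push bad a l t2 (o ++ [y]) hb2]
      simp

lemma not_containsC_short {l σ : List ℕ} (h : l.length < σ.length) : ¬ ContainsC l σ := by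
  rintro ⟨u, hinf, hrel⟩
  have h1 := hinf.length_le
  have h2 := hrel.1
  omega

lemma containsC_mono {t T σ : List ℕ} (h : t <:+: T) : ContainsC t σ → ContainsC T σ := by
  rintro ⟨u, hinf, hrel⟩; exact ⟨u, hinf.trans h, hrel⟩

lemma occ_split {aa x : ℕ} {t' σ : List ℕ} (hk : 3 ≤ σ.length)
    (h : ContainsC (aa :: x :: t') σ) (hs : ¬ ContainsC (x :: t') σ) :
    ∃ v, v <+: t' ∧ SameRel (aa :: x :: v) σ := by
  obtain ⟨u, ⟨w1, w2, he⟩, hrel⟩ := h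
  rcases w1 with _ | ⟨c, w1'⟩
  · rw [List.nil_append] at he
    have hlen : 3 ≤ u.length := hrel.1 ▸ hk
    match u with
    | [] => simp at hlen
    | [u1] => simp at hlen
    | u1 :: u2 :: v =>
      rw [List.cons_append, List.cons_append] at he
      injection he with h1 he'
      injection he' with h2 he''
      subst h1; subst h2
      exact ⟨v, ⟨w2, he''⟩, hrel⟩
  · exfalso
    apply hs
    refine ⟨u, ⟨w1', w2, ?_⟩, hrel⟩
    rw [List.cons_append] at he
    have he2 := congrArg List.tail he
    simpa using he2

lemma stack_nodup {π q : List ℕ} {x : ℕ} (hπ : π.Nodup) (hpre : (q ++ [x]) <+: π) :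
    (x :: q.reverse).Nodup := by
  have h1 : (q ++ [x]).Nodup := hpre.sublist.nodup hπ
  exact ((List.perm_append_singleton x q).trans ((List.reverse_perm q).symm.cons x)).nodup h1

/-- If σ ∈ S_k (k ≥ 3) and both σ and σ̂ contain 231 classically, then
Sort(SC_σ) = Av(132). -/
theorem sort_sc_eq_av132 (k : ℕ) (hk : 3 ≤ k) (a b : ℕ) (rest : List ℕ) (σ : List ℕ)
    (hσdef : σ = a :: b :: rest) (hσ : IsPermList k σ)
    (hσ231 : ContainsPat σ [2, 3, 1]) (hhat : ContainsPat (b :: a :: rest) [2, 3, 1])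
    (n : ℕ) (π : List ℕ) (hπ : IsPermList n π) :
    AvoidsPat (SCc σ π) [2, 3, 1] ↔ AvoidsPat π [1, 3, 2] := by
  have hσlen : σ.length = k := by rw [hσ.length_eq]; simp
  have hπnodup : π.Nodup := hπ.symm.nodup ((List.nodup_range).map (fun u v h => by omega))
  have hσnodup : σ.Nodup := hσ.symm.nodup ((List.nodup_range).map (fun u v h => by omega))
  have hhatnodup : (b :: a :: rest).Nodup := by
    have h0 := hσnodup; rw [hσdef] at h0
    exact (List.Perm.swap b a rest).nodup h0
  have key132 : ∀ q x, (q ++ [x]) <+: π → ContainsC (x :: q.reverse) σ →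
      ContainsPat π [1, 3, 2] := by
    intro q x hpre hcon
    obtain ⟨u, hinf, hrel⟩ := hcon
    have hnd := stack_nodup hπnodup hpre
    have hund : u.Nodup := hinf.sublist.nodup hnd
    have hSR : SR u σ := SR_of_sameRel hund hσnodup hrel
    have hrevsub : u.reverse.Sublist π := by
      have h1 := hinf.sublist.reverse
      rw [List.reverse_cons, List.reverse_reverse] at h1
      exact h1.trans hpre.sublist
    obtain ⟨v, hv, hvrel⟩ := hσ231
    have hvSR : SR v [2, 3, 1] := SR_of_sameRel (hv.nodup hσnodup) (by decide) hvrel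
    obtain ⟨w, hwsub, hwSR⟩ := SR_extract hSR.reverse hv.reverse
    refine ⟨w, hwsub.trans hrevsub, ?_⟩
    have hfin : SR w [1, 3, 2] := hwSR.trans hvSR.reverse
    exact hfin.sameRel
  have houtrev : (∀ q x, (q ++ [x]) <+: π → ¬ ContainsC (x :: q.reverse) σ) →
      SCc σ π = π.reverse := by
    intro hall
    show stackAux (fun l => ContainsC l σ) π [] [] = π.reverse
    have h1 := pushrun (fun l => ContainsC l σ) π [] [] [] (by
      intro q x hq; rw [List.append_nil]; exact hall q x hq)
    rw [List.append_nil] at h1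
    rw [h1, stackAux_nil]
    simp
  constructor
  · intro hav231
    by_contra hcontra
    have hc : ContainsPat π [1, 3, 2] := not_not.mp hcontra
    apply hav231
    by_cases hall : ∀ q x, (q ++ [x]) <+: π → ¬ ContainsC (x :: q.reverse) σ
    · rw [houtrev hall]
      obtain ⟨w, hwsub, hwrel⟩ := hc
      have hwSR : SR w [1, 3, 2] := SR_of_sameRel (hwsub.nodup hπnodup) (by decide) hwrel
      exact ⟨w.reverse, hwsub.reverse, hwSR.reverse.sameRel⟩
    · push_neg at hall
      obtain ⟨q0, x0, hpre0, hcon0⟩ := hall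
      have hPex : ∃ m, ∃ q x, q.length = m ∧ (q ++ [x]) <+: π ∧
          ContainsC (x :: q.reverse) σ := ⟨q0.length, q0, x0, rfl, hpre0, hcon0⟩
      obtain ⟨q, x, hqlen, hqpre, hqcon⟩ := Nat.find_spec hPex
      have hmin : ∀ m, m < Nat.find hPex → ¬ ∃ q' x', q'.length = m ∧ (q' ++ [x']) <+: π ∧
          ContainsC (x' :: q'.reverse) σ := fun m hm => Nat.find_min hPex hm
      have hstack : ¬ ContainsC q.reverse σ := by
        rcases List.eq_nil_or_concat q with rfl | ⟨q', y, rfl⟩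
        · apply not_containsC_short; simp only [List.reverse_nil, List.length_nil]; omega
        · intro hcc
          apply hmin q'.length (by rw [← hqlen]; simp [List.concat_eq_append])
          refine ⟨q', y, rfl, ?_, ?_⟩
          · exact (List.prefix_append _ _).trans
              (by simpa [List.concat_eq_append, List.append_assoc] using hqpre)
          · simpa [List.concat_eq_append] using hcc
      have hqpre2 := hqpre
      obtain ⟨l₂, hl₂⟩ := hqpre2
      have hbadshort : ∀ z, ¬ (fun l => ContainsC l σ) [z] := by
        intro z; apply not_containsC_short; simp only [List.length_cons, List.length_nil]; omega
      have hrun : SCc σ π = stackAux (fun l => ContainsC l σ) (x :: l₂) q.reverse [] := by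
        show stackAux (fun l => ContainsC l σ) π [] [] = _
        rw [← hl₂, List.append_assoc, List.singleton_append]
        have h2 := pushrun (fun l => ContainsC l σ) q (x :: l₂) [] [] (by
          intro q' x' hpre'
          rw [List.append_nil]
          intro hcc
          apply hmin q'.length (by rw [← hqlen]
                                   have := hpre'.length_le
                                   simp only [List.length_append, List.length_cons,
                                     List.length_nil] at this ⊢
                                   omega)
          exact ⟨q', x', rfl, hpre'.trans ((List.prefix_append q [x]).trans hqpre), hcc⟩)
        rw [List.append_nil] at h2
        exact h2
      obtain ⟨d, x', t', ht, hbx, he⟩ :=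
        burst (fun l => ContainsC l σ) hbadshort x l₂ q.reverse [] hqcon
      have havsuf : ¬ ContainsC (x' :: t') σ := by
        intro hcc
        exact hstack (containsC_mono
          (by rw [ht]; exact (List.suffix_append d (x' :: t')).isInfix) hcc)
      obtain ⟨v, hvpre, hvrel⟩ := occ_split (by omega) hbx havsuf
      have hnd : (x :: x' :: v).Nodup := by
        have h1 : (x :: x' :: v).Sublist (x :: q.reverse) := by
          apply List.cons_sublist_cons.mpr
          rw [ht]
          exact (List.cons_sublist_cons.mpr hvpre.sublist).trans
            (List.suffix_append d (x' :: t')).sublist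
        exact h1.nodup (stack_nodup hπnodup hqpre)
      have hSRu : SR (x :: x' :: v) σ := SR_of_sameRel hnd hσnodup hvrel
      rw [hσdef] at hSRu
      have hSRsw : SR (x' :: x :: v) (b :: a :: rest) := SR_swap01 hSRu
      obtain ⟨v₂, hv₂sub, hv₂rel⟩ := hhat
      have hv₂SR : SR v₂ [2, 3, 1] :=
        SR_of_sameRel (hv₂sub.nodup hhatnodup) (by decide) hv₂rel
      obtain ⟨w, hwsub, hwSR⟩ := SR_extract hSRsw hv₂sub
      obtain ⟨r, hr, hsr⟩ := trace (fun l => ContainsC l σ)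
        (2 * l₂.length + (x :: t').length) l₂ (x :: t') ([] ++ d ++ [x']) (le_refl _)
      refine ⟨w, ?_, (hwSR.trans hv₂SR).sameRel⟩
      rw [hrun, he, hr]
      have h2 : (x :: v).Sublist r := (List.cons_sublist_cons.mpr hvpre.sublist).trans hsr
      have h3 : [x'].Sublist ([] ++ d ++ [x']) := (List.suffix_append ([] ++ d) [x']).sublist
      have h4 := h3.append h2
      refine hwsub.trans ?_
      simpa using h4
  · intro hav132 hcontra
    have hall : ∀ q x, (q ++ [x]) <+: π → ¬ ContainsC (x :: q.reverse) σ :=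
      fun q x hpre hcc => hav132 (key132 q x hpre hcc)
    rw [houtrev hall] at hcontra
    obtain ⟨u, hsub, hrel⟩ := hcontra
    have huSR : SR u [2, 3, 1] :=
      SR_of_sameRel (hsub.nodup (List.nodup_reverse.mpr hπnodup)) (by decide) hrel
    apply hav132
    exact ⟨u.reverse, by simpa using hsub.reverse, huSR.reverse.sameRel⟩
end

section
/- For every n ≥ 2, the maximum over π ∈ S_n of |SC_{231}^{-1}(π)| equals 2^{n−2}; in particular the decreasing permutation n(n−1)···1 achieves at least 2^{n−2} preimages under SC_{231}. -/
open List Finset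

attribute [local instance] Classical.propDecidable

namespace SC231

/-! ### A fast, computable model of the consecutive-231-avoiding stack-sorting map.

When an incoming entry `b` meets a stack `a :: c :: t` (top to bottom) with
`c ≤ b < a`, the top `a` is popped; afterwards `b` can always be pushed, since `c ≤ b`
prevents the new head triple from forming the pattern.  Hence the run is described by a
state `(remaining input, current stack top a, rest of stack s)`, where after every step
the stack top is the most recent arrival. -/

/-- Values popped prematurely, in pop order. -/
def fpops : List ℕ → ℕ → List ℕ → List ℕ
  | [], _, _ => []
  | b :: r, a, [] => fpops r b [a]
  | b :: r, a, c :: t => if c ≤ b ∧ b < a then a :: fpops r b (c :: t) else fpops r b (a :: c :: t)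

/-- Final stack (top first). -/
def ffin : List ℕ → ℕ → List ℕ → List ℕ
  | [], a, s => a :: s
  | b :: r, a, [] => ffin r b [a]
  | b :: r, a, c :: t => if c ≤ b ∧ b < a then ffin r b (c :: t) else ffin r b (a :: c :: t)

/-- The premature mask: for each input entry (starting with the current top `a`),
whether it is popped prematurely. -/
def pm : List ℕ → ℕ → List ℕ → List Bool
  | [], _, _ => [false]
  | b :: r, a, [] => false :: pm r b [a]
  | b :: r, a, c :: t =>
      if c ≤ b ∧ b < a then true :: pm r b (c :: t) else false :: pm r b (a :: c :: t)

/-- The whole output of the run: premature pops, then the final stack. -/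
def frun : List ℕ → ℕ → List ℕ → List ℕ
  | [], a, s => a :: s
  | b :: r, a, [] => frun r b [a]
  | b :: r, a, c :: t => if c ≤ b ∧ b < a then a :: frun r b (c :: t) else frun r b (a :: c :: t)

theorem frun_eq : ∀ (r : List ℕ) (a : ℕ) (s : List ℕ),
    frun r a s = fpops r a s ++ ffin r a s
  | [], a, s => rfl
  | b :: r, a, [] => by simp [frun, fpops, ffin, frun_eq r]
  | b :: r, a, c :: t => by
      by_cases h : c ≤ b ∧ b < a <;> simp [frun, fpops, ffin, h, frun_eq r]

theorem pm_length : ∀ (r : List ℕ) (a : ℕ) (s : List ℕ), (pm r a s).length = r.length + 1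
  | [], _, _ => rfl
  | b :: r, a, [] => by simp [pm, pm_length r]
  | b :: r, a, c :: t => by
      by_cases h : c ≤ b ∧ b < a <;> simp [pm, h, pm_length r]

theorem pm_head (r : List ℕ) (a : ℕ) : ∃ m, pm r a [] = false :: m := by
  cases r with
  | nil => exact ⟨[], rfl⟩
  | cons b r => exact ⟨pm r b [a], rfl⟩

theorem pm_concat : ∀ (r : List ℕ) (a : ℕ) (s : List ℕ), ∃ m, pm r a s = m ++ [false]
  | [], _, _ => ⟨[], rfl⟩
  | b :: r, a, [] => by
      obtain ⟨m, hm⟩ := pm_concat r b [a]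
      exact ⟨false :: m, by simp [pm, hm]⟩
  | b :: r, a, c :: t => by
      by_cases h : c ≤ b ∧ b < a
      · obtain ⟨m, hm⟩ := pm_concat r b (c :: t)
        exact ⟨true :: m, by simp [pm, h, hm]⟩
      · obtain ⟨m, hm⟩ := pm_concat r b (a :: c :: t)
        exact ⟨false :: m, by simp [pm, h, hm]⟩

theorem fpops_count : ∀ (r : List ℕ) (a : ℕ) (s : List ℕ),
    (fpops r a s).length = (pm r a s).count true
  | [], _, _ => by simp [fpops, pm]
  | b :: r, a, [] => by simp [fpops, pm, fpops_count r]
  | b :: r, a, c :: t => by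
      by_cases h : c ≤ b ∧ b < a <;>
        simp [fpops, pm, h, List.count_cons, fpops_count r]

/-- Merge two lists according to a boolean mask. -/
def merge : List Bool → List ℕ → List ℕ → List ℕ
  | true :: m, x :: p, q => x :: merge m p q
  | false :: m, p, y :: q => y :: merge m p q
  | _, _, _ => []

/-- Binary encoding of a boolean list. -/
def encode : List Bool → ℕ
  | [] => 0
  | b :: m => 2 * encode m + cond b 1 0

theorem encode_lt : ∀ m : List Bool, encode m < 2 ^ m.length
  | [] => by simp [encode]
  | b :: m => by
      have := encode_lt m
      cases b <;> simp [encode, pow_succ] <;> omega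

theorem encode_append_false : ∀ m : List Bool, encode (m ++ [false]) = encode m
  | [] => by simp [encode]
  | b :: m => by simp [encode, encode_append_false m]

theorem encode_inj : ∀ m₁ m₂ : List Bool, m₁.length = m₂.length →
    encode m₁ = encode m₂ → m₁ = m₂
  | [], [], _, _ => rfl
  | b₁ :: m₁, b₂ :: m₂, hl, he => by
      simp only [List.length_cons, Nat.add_right_cancel_iff] at hl
      have h1 : encode m₁ = encode m₂ ∧ b₁ = b₂ := by
        cases b₁ <;> cases b₂ <;> simp [encode] at he ⊢ <;> omega
      rw [encode_inj m₁ m₂ hl h1.1, h1.2]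

/-! ### Characterisation of consecutive-231 containment -/

theorem sameRel_231_iff (u : List ℕ) :
    SameRel u [2, 3, 1] ↔ ∃ x y z, u = [x, y, z] ∧ x < y ∧ z ≤ x := by
  constructor
  · rintro ⟨hlen, h⟩
    simp only [List.length_cons, List.length_nil] at hlen
    obtain ⟨x, y, z, rfl⟩ := List.length_eq_three.mp hlen
    refine ⟨x, y, z, rfl, ?_, ?_⟩
    · have h01 := h 0 1 (by omega) (by simp)
      simpa using h01
    · have h02 := h 0 2 (by omega) (by simp)
      simp at h02
      omega
  · rintro ⟨x, y, z, rfl, hxy, hzx⟩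
    refine ⟨by simp, ?_⟩
    intro i j hij hj
    simp only [List.length_cons, List.length_nil] at hj
    interval_cases j <;> interval_cases i <;> simp <;> omega

theorem not_containsC_short (l : List ℕ) (h : l.length < 3) : ¬ ContainsC l [2, 3, 1] := by
  rintro ⟨u, hinf, hrel⟩
  obtain ⟨x, y, z, rfl, -, -⟩ := (sameRel_231_iff u).mp hrel
  have hle := hinf.length_le
  simp at hle
  omega

theorem containsC_cons_iff (a : ℕ) (s : List ℕ) :
    ContainsC (a :: s) [2, 3, 1] ↔
      (∃ y z t, s = y :: z :: t ∧ a < y ∧ z ≤ a) ∨ ContainsC s [2, 3, 1] := by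
  constructor
  · rintro ⟨u, hinf, hrel⟩
    obtain ⟨x, y, z, rfl, hxy, hzx⟩ := (sameRel_231_iff u).mp hrel
    rcases List.infix_cons_iff.mp hinf with hpre | hinf'
    · obtain ⟨t, ht⟩ := hpre
      simp only [List.cons_append, List.nil_append, List.cons.injEq] at ht
      obtain ⟨rfl, h2⟩ := ht
      exact Or.inl ⟨y, z, t, h2.symm, hxy, hzx⟩
    · exact Or.inr ⟨_, hinf', hrel⟩
  · rintro (⟨y, z, t, rfl, hay, hza⟩ | ⟨u, hinf, hrel⟩)
    · exact ⟨[a, y, z], ⟨[], t, by simp⟩, (sameRel_231_iff _).mpr ⟨a, y, z, rfl, hay, hza⟩⟩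
    · exact ⟨u, hinf.trans (List.infix_cons (List.infix_refl s)), hrel⟩

/-! ### Bridge: `stackAux` equals the fast model -/

theorem stackAux_eq_frun : ∀ (r : List ℕ) (a : ℕ) (s out : List ℕ),
    ¬ ContainsC (a :: s) [2, 3, 1] →
    stackAux (fun l => ContainsC l [2, 3, 1]) r (a :: s) out =
      out ++ fpops r a s ++ ffin r a s
  | [], a, s, out, _ => by rw [stackAux]; simp [fpops, ffin]
  | b :: r, a, s, out, hav => by
      rw [stackAux.eq_def]
      dsimp only
      by_cases hbad : ContainsC (b :: a :: s) [2, 3, 1]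
      · -- a pop occurs; the popped entry is the current top `a`
        rcases (containsC_cons_iff b (a :: s)).mp hbad with ⟨y, z, t, hst, hby, hzb⟩ | hcon
        · simp only [List.cons.injEq] at hst
          obtain ⟨rfl, rfl⟩ := hst
          rw [if_pos hbad]
          have hs_av : ¬ ContainsC (z :: t) [2, 3, 1] := fun hc =>
            hav ((containsC_cons_iff a (z :: t)).mpr (Or.inr hc))
          have hnew : ¬ ContainsC (b :: z :: t) [2, 3, 1] := by
            intro hc
            rcases (containsC_cons_iff b (z :: t)).mp hc with ⟨y', z', t', ht', hby', hzb'⟩ | hc'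
            · simp only [List.cons.injEq] at ht'
              obtain ⟨rfl, -⟩ := ht'
              omega
            · exact hs_av hc'
          rw [stackAux.eq_def]
          dsimp only
          rw [if_neg hnew]
          rw [stackAux_eq_frun r b (z :: t) (out ++ [a]) hnew]
          have hcond : z ≤ b ∧ b < a := ⟨hzb, hby⟩
          simp [fpops, ffin, hcond]
        · exact absurd hcon hav
      · -- no pop: just push
        rw [if_neg hbad]
        rw [stackAux_eq_frun r b (a :: s) out hbad]
        match s with
        | [] => simp [fpops, ffin]
        | c :: t =>
          have hc : ¬ (c ≤ b ∧ b < a) := fun ⟨h1, h2⟩ =>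
            hbad ((containsC_cons_iff b (a :: c :: t)).mpr (Or.inl ⟨a, c, t, rfl, h2, h1⟩))
          simp [fpops, ffin, hc]

theorem not_containsC_single (a : ℕ) : ¬ ContainsC [a] [2, 3, 1] :=
  not_containsC_short _ (by simp)

theorem SCc_eq (a : ℕ) (r : List ℕ) :
    SCc [2, 3, 1] (a :: r) = fpops r a [] ++ ffin r a [] := by
  show stackAux _ (a :: r) [] [] = _
  rw [stackAux.eq_def]
  dsimp only
  rw [if_neg (not_containsC_single a)]
  simpa using stackAux_eq_frun r a [] [] (not_containsC_single a)

theorem SCc_eq_frun (a : ℕ) (r : List ℕ) :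
    SCc [2, 3, 1] (a :: r) = frun r a [] := by
  rw [SCc_eq, frun_eq]

/-! ### Reconstruction: the input is determined by the output and the mask -/

theorem reconstruct : ∀ (r : List ℕ) (a : ℕ) (s : List ℕ),
    ∃ g, ffin r a s = g ++ s ∧ a :: r = merge (pm r a s) (fpops r a s) g.reverse
  | [], a, s => ⟨[a], rfl, by simp [pm, fpops, merge]⟩
  | b :: r, a, [] => by
      obtain ⟨g, hg, hm⟩ := reconstruct r b [a]
      refine ⟨g ++ [a], by simpa [ffin] using hg, ?_⟩
      simp only [pm, fpops, List.reverse_append, List.reverse_cons, List.reverse_nil,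
        List.nil_append, List.singleton_append]
      simpa [merge] using hm
  | b :: r, a, c :: t => by
      by_cases h : c ≤ b ∧ b < a
      · obtain ⟨g, hg, hm⟩ := reconstruct r b (c :: t)
        refine ⟨g, by simp [ffin, h, hg], ?_⟩
        simp only [pm, fpops, if_pos h]
        simpa [merge] using hm
      · obtain ⟨g, hg, hm⟩ := reconstruct r b (a :: c :: t)
        refine ⟨g ++ [a], by simpa [ffin, h] using hg, ?_⟩
        simp only [pm, fpops, if_neg h, List.reverse_append, List.reverse_cons,
          List.reverse_nil, List.nil_append, List.singleton_append]
        simpa [merge] using hm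

/-! ### The decreasing list and min-max words -/

/-- `decList n = [n, n-1, …, 1]`. -/
def decList : ℕ → List ℕ
  | 0 => []
  | n + 1 => (n + 1) :: decList n

theorem decList_eq : ∀ n : ℕ, decList n = ((List.range n).map (· + 1)).reverse
  | 0 => rfl
  | n + 1 => by
      rw [List.range_succ]
      simp [decList, decList_eq n]

/-- The min-max word over `{lo, …, hi}` determined by a list of bits. -/
def word : List Bool → ℕ → ℕ → List ℕ
  | [], lo, _ => [lo]
  | b :: bs, lo, hi => if b then hi :: word bs lo (hi - 1) else lo :: word bs (lo + 1) hi

theorem word_perm : ∀ (bs : List Bool) (lo hi : ℕ), hi = lo + bs.length →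
    word bs lo hi ~ List.range' lo (bs.length + 1)
  | [], lo, hi, h => by simp [word]
  | b :: bs, lo, hi, h => by
      cases b with
      | false =>
          have := word_perm bs (lo + 1) hi (by simp at h; omega)
          simpa [word, List.range'_succ] using this.cons lo
      | true =>
          have hperm := word_perm bs lo (hi - 1) (by simp at h; omega)
          simp only [word, if_pos, List.length_cons]
          rw [List.range'_concat]
          have hhi : lo + 1 * (bs.length + 1) = hi := by simp at h; omega
          rw [hhi]
          calc hi :: word bs lo (hi - 1) ~ hi :: List.range' lo (bs.length + 1) :=
                hperm.cons hi
            _ ~ List.range' lo (bs.length + 1) ++ [hi] := (List.perm_append_singleton hi _).symm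

theorem word_inj : ∀ (bs₁ bs₂ : List Bool) (lo hi : ℕ), bs₁.length = bs₂.length →
    hi = lo + bs₁.length → word bs₁ lo hi = word bs₂ lo hi → bs₁ = bs₂
  | [], [], _, _, _, _, _ => rfl
  | true :: bs₁, true :: bs₂, lo, hi, hl, hhi, he => by
      simp only [word, if_pos] at he
      simp only [List.cons.injEq] at he
      simp only [List.length_cons, Nat.add_right_cancel_iff] at hl
      rw [word_inj bs₁ bs₂ lo (hi - 1) hl (by simp at hhi; omega) he.2]
  | false :: bs₁, false :: bs₂, lo, hi, hl, hhi, he => by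
      simp only [word] at he
      simp only [if_neg (by simp : ¬ (false = true)), List.cons.injEq] at he
      simp only [List.length_cons, Nat.add_right_cancel_iff] at hl
      rw [word_inj bs₁ bs₂ (lo + 1) hi hl (by simp at hhi; omega) he.2]
  | true :: bs₁, false :: bs₂, lo, hi, hl, hhi, he => by
      simp only [word, if_pos, if_neg (by simp : ¬ (false = true)), List.cons.injEq] at he
      simp only [List.length_cons] at hhi
      omega
  | false :: bs₁, true :: bs₂, lo, hi, hl, hhi, he => by
      simp only [word, if_pos, if_neg (by simp : ¬ (false = true)), List.cons.injEq] at he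
      simp only [List.length_cons] at hhi
      omega

/-- The bits of `k` as a list of length `w` (little-endian from the head). -/
def natToBits : ℕ → ℕ → List Bool
  | 0, _ => []
  | w + 1, k => (decide (k % 2 = 1)) :: natToBits w (k / 2)

theorem natToBits_length : ∀ (w k : ℕ), (natToBits w k).length = w
  | 0, _ => rfl
  | w + 1, k => by simp [natToBits, natToBits_length w]

theorem encode_natToBits : ∀ (w k : ℕ), k < 2 ^ w → encode (natToBits w k) = k
  | 0, k, h => by
      interval_cases k
      rfl
  | w + 1, k, h => by
      have hk : k / 2 < 2 ^ w := by
        rw [pow_succ] at h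
        omega
      have := encode_natToBits w (k / 2) hk
      rcases Nat.mod_two_eq_zero_or_one k with hm | hm <;>
        simp [natToBits, encode, hm, this] <;> omega

/-! ### The run of the algorithm on min-max words -/

theorem runAB : ∀ bs : List Bool,
    (∀ m hi, hi = m + 2 + bs.length →
      frun (word bs (m + 2) hi) (m + 1) (decList m) = decList hi) ∧
    (∀ m hi h, hi = m + 2 + bs.length → hi < h →
      frun (word bs (m + 2) hi) h (decList (m + 1)) = h :: decList hi)
  | [] => by
      constructor
      · intro m hi hhi
        simp only [List.length_nil, Nat.add_zero] at hhi
        subst hhi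
        cases m with
        | zero => simp [word, frun, decList]
        | succ k =>
            have hc : ¬ (k + 1 ≤ k + 3 ∧ k + 3 < k + 2) := by omega
            show frun [k + 3] (k + 2) ((k + 1) :: decList k) = decList (k + 3)
            simp [frun, hc, decList]
      · intro m hi h hhi hlt
        simp only [List.length_nil, Nat.add_zero] at hhi
        subst hhi
        have hc : (m + 1 ≤ m + 2 ∧ m + 2 < h) := ⟨by omega, hlt⟩
        show frun [m + 2] h ((m + 1) :: decList m) = h :: decList (m + 2)
        simp [frun, hc, decList]
  | t :: bs => by
      obtain ⟨ihA, ihB⟩ := runAB bs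
      constructor
      · intro m hi hhi
        simp only [List.length_cons] at hhi
        cases t with
        | false =>
            have hstep : frun ((m + 2) :: word bs (m + 3) hi) (m + 1) (decList m) =
                frun (word bs (m + 3) hi) (m + 2) (decList (m + 1)) := by
              cases m with
              | zero => simp [frun, decList]
              | succ k =>
                  have hc : ¬ (k + 1 ≤ k + 3 ∧ k + 3 < k + 2) := by omega
                  simp [frun, decList, hc]
            simp only [word, if_neg (by simp : ¬ (false = true))]
            rw [hstep]
            exact ihA (m + 1) hi (by omega)
        | true =>
            have hstep : frun (hi :: word bs (m + 2) (hi - 1)) (m + 1) (decList m) =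
                frun (word bs (m + 2) (hi - 1)) hi (decList (m + 1)) := by
              cases m with
              | zero => simp [frun, decList]
              | succ k =>
                  have hc : ¬ (k + 1 ≤ hi ∧ hi < k + 2) := by omega
                  simp [frun, decList, hc]
                  intro _ _
                  omega
            simp only [word, if_pos]
            rw [hstep]
            have := ihB m (hi - 1) hi (by omega) (by omega)
            rw [this]
            have : hi = (hi - 1) + 1 := by omega
            rw [this]
            rfl
      · intro m hi h hhi hlt
        simp only [List.length_cons] at hhi
        cases t with
        | false =>
            have hc : (m + 1 ≤ m + 2 ∧ m + 2 < h) := ⟨by omega, by omega⟩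
            simp only [word, if_neg (by simp : ¬ (false = true))]
            show frun ((m+2) :: word bs (m + 3) hi) h ((m+1) :: decList m) = _
            simp only [frun, if_pos hc]
            rw [show ((m+1) :: decList m) = decList (m+1) from rfl]
            rw [ihA (m + 1) hi (by omega)]
        | true =>
            have hc : (m + 1 ≤ hi ∧ hi < h) := ⟨by omega, hlt⟩
            simp only [word, if_pos]
            show frun (hi :: word bs (m + 2) (hi - 1)) h ((m+1) :: decList m) = _
            simp only [frun, if_pos hc]
            rw [show ((m+1) :: decList m) = decList (m+1) from rfl]
            rw [ihB m (hi - 1) hi (by omega) (by omega)]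
            have : hi = (hi - 1) + 1 := by omega
            rw [this]
            rfl

end SC231

namespace SC231

theorem mem_permsFinset {n : ℕ} {τ : List ℕ} :
    τ ∈ permsFinset n ↔ τ.Perm ((List.range n).map (· + 1)) := by
  rw [permsFinset, List.mem_toFinset, List.mem_permutations]

theorem length_of_mem {n : ℕ} {τ : List ℕ} (h : τ ∈ permsFinset n) : τ.length = n := by
  have := (mem_permsFinset.mp h).length_eq
  simpa using this

theorem mask_decomp (n : ℕ) (hn : 2 ≤ n) (a : ℕ) (r : List ℕ) (hlen : r.length + 1 = n) :
    ∃ mid, pm r a [] = false :: (mid ++ [false]) ∧ mid.length = n - 2 := by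
  obtain ⟨m', h1⟩ := pm_head r a
  obtain ⟨m'', h2⟩ := pm_concat r a []
  have hlenpm : (pm r a []).length = n := by rw [pm_length]; omega
  match m'', h2 with
  | [], h2 => 
      rw [h2] at hlenpm
      simp at hlenpm
      omega
  | b :: mid, h2 =>
      rw [h1] at h2
      simp only [List.cons_append, List.cons.injEq] at h2
      obtain ⟨hb, hm'⟩ := h2
      refine ⟨mid, by rw [h1, hm', hb], ?_⟩
      rw [h1, hm'] at hlenpm
      simp at hlenpm
      omega

theorem upper (n : ℕ) (hn : 2 ≤ n) (π : List ℕ) :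
    preCount (SCc [2, 3, 1]) n π ≤ 2 ^ (n - 2) := by
  rw [preCount, ← Finset.card_range (2 ^ (n - 2))]
  apply Finset.card_le_card_of_injOn (fun τ => encode ((pm τ.tail τ.headI []).drop 1))
  · intro τ hτ
    rw [Finset.mem_coe, Finset.mem_filter] at hτ
    obtain ⟨hmem, -⟩ := hτ
    have hlen : τ.length = n := length_of_mem hmem
    obtain ⟨a, r, rfl⟩ : ∃ a r, τ = a :: r := by
      cases τ with
      | nil => simp at hlen; omega
      | cons a r => exact ⟨a, r, rfl⟩
    simp only [List.length_cons] at hlen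
    obtain ⟨mid, hmask, hmid⟩ := mask_decomp n hn a r hlen
    simp only [List.tail_cons, List.headI_cons, Finset.mem_coe, Finset.mem_range]
    rw [hmask]
    simp only [List.drop_succ_cons, List.drop_zero]
    rw [encode_append_false]
    calc encode mid < 2 ^ mid.length := encode_lt mid
      _ = 2 ^ (n - 2) := by rw [hmid]
  · intro τ₁ h₁ τ₂ h₂ heq
    rw [Finset.mem_coe, Finset.mem_filter] at h₁ h₂
    obtain ⟨hmem₁, hsc₁⟩ := h₁
    obtain ⟨hmem₂, hsc₂⟩ := h₂
    have hlen₁ : τ₁.length = n := length_of_mem hmem₁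
    have hlen₂ : τ₂.length = n := length_of_mem hmem₂
    obtain ⟨a₁, r₁, rfl⟩ : ∃ a r, τ₁ = a :: r := by
      cases τ₁ with
      | nil => simp at hlen₁; omega
      | cons a r => exact ⟨a, r, rfl⟩
    obtain ⟨a₂, r₂, rfl⟩ : ∃ a r, τ₂ = a :: r := by
      cases τ₂ with
      | nil => simp at hlen₂; omega
      | cons a r => exact ⟨a, r, rfl⟩
    simp only [List.length_cons] at hlen₁ hlen₂
    obtain ⟨mid₁, hmask₁, hmid₁⟩ := mask_decomp n hn a₁ r₁ hlen₁
    obtain ⟨mid₂, hmask₂, hmid₂⟩ := mask_decomp n hn a₂ r₂ hlen₂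
    simp only [List.tail_cons, List.headI_cons, hmask₁, hmask₂,
      List.drop_succ_cons, List.drop_zero, encode_append_false] at heq
    have hmideq : mid₁ = mid₂ := encode_inj _ _ (by omega) heq
    have hM : pm r₁ a₁ [] = pm r₂ a₂ [] := by rw [hmask₁, hmask₂, hmideq]
    -- the two runs have the same premature mask, hence the same split of π
    have hk : (fpops r₁ a₁ []).length = (fpops r₂ a₂ []).length := by
      rw [fpops_count, fpops_count, hM]
    rw [SCc_eq] at hsc₁ hsc₂
    have hfp : fpops r₁ a₁ [] = fpops r₂ a₂ [] := by
      have t₁ : (fpops r₁ a₁ [] ++ ffin r₁ a₁ []).take (fpops r₁ a₁ []).length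
          = fpops r₁ a₁ [] := List.take_left
      have t₂ : (fpops r₂ a₂ [] ++ ffin r₂ a₂ []).take (fpops r₂ a₂ []).length
          = fpops r₂ a₂ [] := List.take_left
      rw [hsc₁] at t₁
      rw [hsc₂] at t₂
      rw [← t₁, ← t₂, hk]
    have hff : ffin r₁ a₁ [] = ffin r₂ a₂ [] := by
      have t₁ : (fpops r₁ a₁ [] ++ ffin r₁ a₁ []).drop (fpops r₁ a₁ []).length
          = ffin r₁ a₁ [] := List.drop_left
      have t₂ : (fpops r₂ a₂ [] ++ ffin r₂ a₂ []).drop (fpops r₂ a₂ []).length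
          = ffin r₂ a₂ [] := List.drop_left
      rw [hsc₁] at t₁
      rw [hsc₂] at t₂
      rw [← t₁, ← t₂, hk]
    obtain ⟨g₁, hg₁, hrec₁⟩ := reconstruct r₁ a₁ []
    obtain ⟨g₂, hg₂, hrec₂⟩ := reconstruct r₂ a₂ []
    rw [List.append_nil] at hg₁ hg₂
    rw [hrec₁, hrec₂, hM, hfp, ← hg₁, ← hg₂, hff]

theorem lower (n : ℕ) (hn : 2 ≤ n) :
    2 ^ (n - 2) ≤ preCount (SCc [2, 3, 1]) n (((List.range n).map (· + 1)).reverse) := by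
  rw [preCount, ← Finset.card_range (2 ^ (n - 2))]
  apply Finset.card_le_card_of_injOn (fun k => 1 :: word (natToBits (n - 2) k) 2 n)
  · intro k hk
    rw [Finset.mem_coe, Finset.mem_range] at hk
    have hbs : (natToBits (n - 2) k).length = n - 2 := natToBits_length _ _
    rw [Finset.mem_coe, Finset.mem_filter]
    constructor
    · rw [mem_permsFinset]
      have hp := word_perm (natToBits (n - 2) k) 2 n (by omega)
      rw [hbs] at hp
      have h1 : List.range' 1 n = 1 :: List.range' 2 (n - 2 + 1) := by
        have e : n = n - 2 + 1 + 1 := by omega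
        conv_lhs => rw [e]
        rw [List.range'_succ]
      have h2 : List.range' 1 n = List.map (· + 1) (List.range n) := by
        rw [List.range'_eq_map_range]
        have : (fun x => 1 + x) = (fun x : ℕ => x + 1) := funext fun x => Nat.add_comm 1 x
        simp only [this]
      calc 1 :: word (natToBits (n - 2) k) 2 n
          ~ 1 :: List.range' 2 (n - 2 + 1) := hp.cons 1
        _ = List.range' 1 n := h1.symm
        _ = List.map (· + 1) (List.range n) := h2
    · show SCc [2, 3, 1] _ = _
      rw [SCc_eq_frun]
      have hrun := (runAB (natToBits (n - 2) k)).1 0 n (by omega)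
      simp only [Nat.zero_add] at hrun
      rw [show decList 0 = [] from rfl] at hrun
      rw [hrun, decList_eq]
  · intro k₁ h₁ k₂ h₂ heq
    rw [Finset.mem_coe, Finset.mem_range] at h₁ h₂
    simp only [List.cons.injEq, true_and] at heq
    have hw := word_inj (natToBits (n - 2) k₁) (natToBits (n - 2) k₂) 2 n
      (by rw [natToBits_length, natToBits_length])
      (by rw [natToBits_length]; omega) heq
    calc k₁ = encode (natToBits (n - 2) k₁) := (encode_natToBits _ _ h₁).symm
      _ = encode (natToBits (n - 2) k₂) := by rw [hw]
      _ = k₂ := encode_natToBits _ _ h₂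

end SC231

/-- For n ≥ 2, max_{π ∈ S_n} |SC_{231}^{-1}(π)| = 2^{n−2}, and the
decreasing permutation n(n−1)⋯1 has at least 2^{n−2} preimages under SC_{231}. -/
theorem max_preimages_sc231 (n : ℕ) (hn : 2 ≤ n) :
    (∀ π ∈ permsFinset n, preCount (SCc [2, 3, 1]) n π ≤ 2 ^ (n - 2)) ∧
    (∃ π ∈ permsFinset n, preCount (SCc [2, 3, 1]) n π = 2 ^ (n - 2)) ∧
    2 ^ (n - 2) ≤ preCount (SCc [2, 3, 1]) n (((List.range n).map (· + 1)).reverse) := by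
  refine ⟨fun π _ => SC231.upper n hn π, ?_, SC231.lower n hn⟩
  refine ⟨((List.range n).map (· + 1)).reverse, ?_, ?_⟩
  · exact SC231.mem_permsFinset.mpr (List.reverse_perm _)
  · exact le_antisymm (SC231.upper n hn _) (SC231.lower n hn)
end
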